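/- Let s > 0 be a real number that is not an integer, and write s = S + σ where S is a nonnegative integer and σ ∈ (0, 1). Then there is a constant C(s) depending only on s (one may take C(s) = e / min(σ, 1 − σ) + 1/s) such that for every complex number w with Re(w) ≥ 0, ∫₀^∞ | ( ∑_{ℓ=0}^{S} (−λw)^ℓ / ℓ! ) − e^{−λw} | · λ^{−(S + 1 + σ)} dλ ≤ C(s) · |w|^s, where the integral is with respect to Lebesgue measure on (0, ∞). -/

import Mathlib

open Finset MeasureTheory

lemma hasDerivAt_T (w : ℂ) (n : ℕ) (z : ℂ) :
    HasDerivAt (fun z : ℂ => ∑ ℓ ∈ Finset.range (n+1), (-z * w) ^ ℓ / (Nat.factorial ℓ : ℂ))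
      (-w * ∑ ℓ ∈ Finset.range n, (-z * w) ^ ℓ / (Nat.factorial ℓ : ℂ)) z := by
  induction n with
  | zero => simpa using hasDerivAt_const z (1:ℂ)
  | succ n ih =>
      have h1 : HasDerivAt (fun z : ℂ => (-z * w) ^ (n+1) / (Nat.factorial (n+1) : ℂ))
          (-w * ((-z * w) ^ n / (Nat.factorial n : ℂ))) z := by
        have h := (((hasDerivAt_id z).neg.mul_const w).pow (n+1)).div_const
          (Nat.factorial (n+1) : ℂ)
        refine h.congr_deriv ?_
        have hfac : ((Nat.factorial (n+1) : ℂ)) = (n+1) * (Nat.factorial n : ℂ) := by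
          push_cast [Nat.factorial_succ]; ring
        have h0 : (Nat.factorial n : ℂ) ≠ 0 := Nat.cast_ne_zero.mpr (Nat.factorial_ne_zero n)
        have h1' : ((n:ℂ)+1) ≠ 0 := Nat.cast_add_one_ne_zero n
        simp only [Nat.add_sub_cancel, Pi.neg_apply, id_eq]
        rw [hfac]
        field_simp
        push_cast
        ring
      have h2 := ih.add h1
      have heq : (fun z : ℂ => ∑ ℓ ∈ Finset.range (n+2), (-z * w) ^ ℓ / (Nat.factorial ℓ : ℂ))
          = fun z : ℂ => (∑ ℓ ∈ Finset.range (n+1), (-z * w) ^ ℓ / (Nat.factorial ℓ : ℂ))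
            + (-z * w) ^ (n+1) / (Nat.factorial (n+1) : ℂ) := by
        funext z; rw [Finset.sum_range_succ]
      rw [heq, show -w * ∑ ℓ ∈ Finset.range (n+1), (-z * w) ^ ℓ / (Nat.factorial ℓ : ℂ)
          = -w * ∑ ℓ ∈ Finset.range n, (-z * w) ^ ℓ / (Nat.factorial ℓ : ℂ)
            + -w * ((-z * w) ^ n / (Nat.factorial n : ℂ)) by rw [Finset.sum_range_succ]; ring]
      exact h2

lemma hasDerivAt_F (w : ℂ) (n : ℕ) (x : ℝ) :
    HasDerivAt (fun x : ℝ => Complex.exp (-(x:ℂ) * w)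
        - ∑ ℓ ∈ Finset.range (n+1), (-(x:ℂ) * w) ^ ℓ / (Nat.factorial ℓ : ℂ))
      (-w * (Complex.exp (-(x:ℂ) * w) - ∑ ℓ ∈ Finset.range n, (-(x:ℂ) * w) ^ ℓ / (Nat.factorial ℓ : ℂ))) x := by
  have hexp : ∀ z : ℂ, HasDerivAt (fun z : ℂ => Complex.exp (-z * w)) (-w * Complex.exp (-z * w)) z := by
    intro z
    have h := ((hasDerivAt_id z).neg.mul_const w).cexp
    refine h.congr_deriv ?_ <;> simp <;> ring_nf
  have hG : HasDerivAt (fun z : ℂ => Complex.exp (-z * w)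
      - ∑ ℓ ∈ Finset.range (n+1), (-z * w) ^ ℓ / (Nat.factorial ℓ : ℂ))
      (-w * (Complex.exp (-(x:ℂ) * w) - ∑ ℓ ∈ Finset.range n, (-(x:ℂ) * w) ^ ℓ / (Nat.factorial ℓ : ℂ))) (x:ℂ) := by
    have := (hexp (x:ℂ)).sub (hasDerivAt_T w n (x:ℂ))
    refine this.congr_deriv ?_; ring
  exact hG.comp_ofReal

lemma taylor_bound (w : ℂ) (hw : 0 ≤ w.re) :
    ∀ n : ℕ, ∀ l : ℝ, 0 ≤ l →
    ‖Complex.exp (-(l:ℂ) * w)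
        - ∑ ℓ ∈ Finset.range (n+1), (-(l:ℂ) * w) ^ ℓ / (Nat.factorial ℓ : ℂ)‖
      ≤ (‖w‖ * l) ^ (n+1) / (Nat.factorial (n+1) : ℝ) := by
  have hexpnorm : ∀ x : ℝ, 0 ≤ x → ‖Complex.exp (-(x:ℂ) * w)‖ ≤ 1 := by
    intro x hx
    rw [Complex.norm_exp]
    rw [Real.exp_le_one_iff]
    have : (-(x:ℂ) * w).re = -x * w.re := by simp
    rw [this]
    nlinarith
  intro n
  induction n with
  | zero =>
      intro l hl
      have key := image_norm_le_of_norm_deriv_right_le_deriv_boundary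
        (f := fun x : ℝ => Complex.exp (-(x:ℂ) * w)
          - ∑ ℓ ∈ Finset.range 1, (-(x:ℂ) * w) ^ ℓ / (Nat.factorial ℓ : ℂ))
        (f' := fun x : ℝ => -w * (Complex.exp (-(x:ℂ) * w)
          - ∑ ℓ ∈ Finset.range 0, (-(x:ℂ) * w) ^ ℓ / (Nat.factorial ℓ : ℂ)))
        (a := 0) (b := l)
        (fun x _ => (hasDerivAt_F w 0 x).continuousAt.continuousWithinAt)
        (fun x _ => (hasDerivAt_F w 0 x).hasDerivWithinAt)
        (B := fun x => ‖w‖ * x) (B' := fun _ => ‖w‖)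
        (by simp)
        (fun x => by simpa using (hasDerivAt_id x).const_mul (‖w‖))
        (fun x hx => by
          simp only [Finset.range_zero, Finset.sum_empty, sub_zero, norm_mul, norm_neg]
          calc ‖w‖ * ‖Complex.exp (-(x:ℂ) * w)‖
              ≤ ‖w‖ * 1 := by
                have := hexpnorm x hx.1
                exact mul_le_mul_of_nonneg_left this (norm_nonneg w)
            _ = ‖w‖ := mul_one _)
      have h := key (Set.right_mem_Icc.mpr hl)
      calc ‖_‖ ≤ ‖w‖ * l := h
        _ = (‖w‖ * l) ^ (0+1) / (Nat.factorial (0+1) : ℝ) := by norm_num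
  | succ n ih =>
      intro l hl
      have key := image_norm_le_of_norm_deriv_right_le_deriv_boundary
        (f := fun x : ℝ => Complex.exp (-(x:ℂ) * w)
          - ∑ ℓ ∈ Finset.range (n+2), (-(x:ℂ) * w) ^ ℓ / (Nat.factorial ℓ : ℂ))
        (f' := fun x : ℝ => -w * (Complex.exp (-(x:ℂ) * w)
          - ∑ ℓ ∈ Finset.range (n+1), (-(x:ℂ) * w) ^ ℓ / (Nat.factorial ℓ : ℂ)))
        (a := 0) (b := l)
        (fun x _ => (hasDerivAt_F w (n+1) x).continuousAt.continuousWithinAt)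
        (fun x _ => (hasDerivAt_F w (n+1) x).hasDerivWithinAt)
        (B := fun x => (‖w‖ * x) ^ (n+2) / (Nat.factorial (n+2) : ℝ))
        (B' := fun x => ‖w‖ * ((‖w‖ * x) ^ (n+1) / (Nat.factorial (n+1) : ℝ)))
        (by
          show ‖Complex.exp (-((0:ℝ):ℂ) * w) - ∑ ℓ ∈ Finset.range (n+1+1),
              (-((0:ℝ):ℂ) * w) ^ ℓ / (Nat.factorial ℓ : ℂ)‖
            ≤ (‖w‖ * 0) ^ (n+2) / (Nat.factorial (n+2) : ℝ)
          rw [Finset.sum_range_succ']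
          simp)
        (fun x => by
          have h := ((((hasDerivAt_id x).const_mul (‖w‖)).pow (n+2)).div_const
            ((Nat.factorial (n+2) : ℝ)))
          refine h.congr_deriv ?_
          have hfac : ((Nat.factorial (n+2) : ℝ)) = (n+2) * (Nat.factorial (n+1) : ℝ) := by
            push_cast [Nat.factorial_succ]; ring
          have h0 : (Nat.factorial (n+1) : ℝ) ≠ 0 := Nat.cast_ne_zero.mpr (Nat.factorial_ne_zero _)
          have h1 : ((n:ℝ)+2) ≠ 0 := by positivity
          simp only [Nat.add_sub_cancel, id_eq, mul_one]
          rw [hfac]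
          push_cast
          field_simp)
        (fun x hx => by
          rw [norm_mul, norm_neg]
          exact mul_le_mul_of_nonneg_left (ih x hx.1) (norm_nonneg w))
      have h := key (Set.right_mem_Icc.mpr hl)
      exact h

lemma sum_range_zero_pow (m : ℕ) :
    ∑ ℓ ∈ Finset.range (m+1), ((0:ℂ)) ^ ℓ / (Nat.factorial ℓ : ℂ) = 1 := by
  rw [Finset.sum_range_succ']; simp

lemma sum_inv_factorial_le (m : ℕ) :
    ∑ ℓ ∈ Finset.range m, (1:ℝ)/(Nat.factorial ℓ : ℝ) ≤ Real.exp 1 := by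
  simpa using Real.sum_le_exp_of_nonneg zero_le_one m

/-- Let `s > 0` be noninteger, `s = S + σ` with `S ∈ ℕ ∪ {0}`, `σ ∈ (0,1)`.
With `C(s) = e / min(σ, 1−σ) + 1/s`, for every `w ∈ ℂ` with `Re w ≥ 0`,
`∫₀^∞ |(∑_{ℓ=0}^S (−λw)^ℓ/ℓ!) − e^{−λw}| λ^{−(S+1+σ)} dλ ≤ C(s) |w|^s`. -/
theorem stmt18 (s : ℝ) (hs : 0 < s) (S : ℕ) (σ : ℝ) (hσ : σ ∈ Set.Ioo (0 : ℝ) 1)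
    (hssum : s = (S : ℝ) + σ) (w : ℂ) (hw : 0 ≤ w.re) :
    ∫ l in Set.Ioi (0 : ℝ),
        ‖(∑ ℓ ∈ Finset.range (S + 1), (-(l : ℂ) * w) ^ ℓ / (Nat.factorial ℓ : ℂ))
          - Complex.exp (-(l : ℂ) * w)‖ * l ^ (-((S : ℝ) + 1 + σ))
      ≤ (Real.exp 1 / min σ (1 - σ) + 1 / s) * ‖w‖ ^ s := by
  obtain ⟨hσ0, hσ1⟩ := hσ
  set e : ℝ := -((S : ℝ) + 1 + σ) with he_def
  have he : e = -s - 1 := by rw [hssum]; ring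
  -- switch the order in the absolute value
  have habs : ∀ l : ℝ,
      ‖(∑ ℓ ∈ Finset.range (S + 1), (-(l : ℂ) * w) ^ ℓ / (Nat.factorial ℓ : ℂ))
          - Complex.exp (-(l : ℂ) * w)‖
        = ‖Complex.exp (-(l : ℂ) * w)
          - ∑ ℓ ∈ Finset.range (S + 1), (-(l : ℂ) * w) ^ ℓ / (Nat.factorial ℓ : ℂ)‖ :=
    fun l => norm_sub_rev _ _
  simp_rw [habs]
  set g : ℝ → ℝ := fun l => ‖Complex.exp (-(l : ℂ) * w)
      - ∑ ℓ ∈ Finset.range (S + 1), (-(l : ℂ) * w) ^ ℓ / (Nat.factorial ℓ : ℂ)‖ * l ^ e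
    with hg_def
  by_cases hw0 : w = 0
  · subst hw0
    have h0 : ∀ l : ℝ, g l = 0 := by
      intro l
      simp [hg_def, sum_range_zero_pow S]
    rw [show g = (fun _ : ℝ => (0:ℝ)) from funext h0]
    simp [Real.zero_rpow hs.ne']
  -- main case
  have hW : 0 < ‖w‖ := norm_pos_iff.mpr hw0
  set W : ℝ := ‖w‖ with hW_def
  set t : ℝ := W⁻¹ with ht_def
  have ht : 0 < t := inv_pos.mpr hW
  have htpow : ∀ y : ℝ, t ^ y = W ^ (-y) := fun y => by
    rw [ht_def, Real.inv_rpow hW.le, ← Real.rpow_neg hW.le]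
  have hWpow : ∀ (k : ℕ) (y : ℝ), W ^ k * W ^ y = W ^ ((k : ℝ) + y) := fun k y => by
    rw [← Real.rpow_natCast W k, ← Real.rpow_add hW]
  -- nonnegativity of g
  have hgnn : ∀ l : ℝ, 0 < l → 0 ≤ g l := fun l hl =>
    mul_nonneg (norm_nonneg _) (Real.rpow_nonneg hl.le _)
  -- measurability
  have hmeas : Measurable g := by
    apply Measurable.mul
    · apply Continuous.measurable
      exact continuous_norm.comp (by fun_prop)
    · measurability
  -- constants
  set c1 : ℝ := W ^ (S+1) / (Nat.factorial (S+1) : ℝ) with hc1_def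
  -- pointwise bound on (0, t]
  have hb1 : ∀ l ∈ Set.Ioc (0:ℝ) t, g l ≤ c1 * l ^ (-σ) := by
    intro l hl
    have h := taylor_bound w hw S l hl.1.le
    have h2 : g l ≤ ((W * l) ^ (S+1) / (Nat.factorial (S+1) : ℝ)) * l ^ e :=
      mul_le_mul_of_nonneg_right h (Real.rpow_nonneg hl.1.le _)
    refine h2.trans_eq ?_
    have hle : (l:ℝ) ^ (S+1) * l ^ e = l ^ (-σ) := by
      rw [← Real.rpow_natCast l (S+1), ← Real.rpow_add hl.1]
      congr 1
      push_cast [he_def]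
      ring
    rw [mul_pow, hc1_def]
    rw [show W ^ (S+1) * l ^ (S+1) / (Nat.factorial (S+1) : ℝ) * l ^ e
        = W ^ (S+1) / (Nat.factorial (S+1) : ℝ) * ((l:ℝ) ^ (S+1) * l ^ e) by ring, hle]
  -- pointwise bound on (t, ∞)
  have hexpnorm : ∀ x : ℝ, 0 ≤ x → ‖Complex.exp (-(x:ℂ) * w)‖ ≤ 1 := by
    intro x hx
    rw [Complex.norm_exp, Real.exp_le_one_iff]
    have : (-(x:ℂ) * w).re = -x * w.re := by simp
    rw [this]; nlinarith
  have hb2 : ∀ l ∈ Set.Ioi t, g l ≤ l ^ (-s-1)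
      + ∑ ℓ ∈ Finset.range (S+1), (W ^ ℓ / (Nat.factorial ℓ : ℝ)) * l ^ ((ℓ:ℝ) - s - 1) := by
    intro l hl
    have hl0 : 0 < l := ht.trans hl
    have hsum : ‖∑ ℓ ∈ Finset.range (S+1), (-(l:ℂ) * w) ^ ℓ / (Nat.factorial ℓ : ℂ)‖
        ≤ ∑ ℓ ∈ Finset.range (S+1), (W * l) ^ ℓ / (Nat.factorial ℓ : ℝ) := by
      have hns := norm_sum_le (Finset.range (S+1))
        (fun ℓ => (-(l:ℂ) * w) ^ ℓ / (Nat.factorial ℓ : ℂ))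
      refine hns.trans (le_of_eq (Finset.sum_congr rfl fun ℓ _ => ?_))
      have habsl : ‖-(l:ℂ) * w‖ = W * l := by
        rw [norm_mul, norm_neg, Complex.norm_real, Real.norm_eq_abs, abs_of_pos hl0, mul_comm]
      rw [norm_div, norm_pow, habsl, Complex.norm_natCast]
    have habs2 : ‖Complex.exp (-(l:ℂ) * w)
        - ∑ ℓ ∈ Finset.range (S+1), (-(l:ℂ) * w) ^ ℓ / (Nat.factorial ℓ : ℂ)‖
        ≤ 1 + ∑ ℓ ∈ Finset.range (S+1), (W * l) ^ ℓ / (Nat.factorial ℓ : ℝ) := by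
      have hns2 := norm_sub_le (Complex.exp (-(l:ℂ) * w))
        (∑ ℓ ∈ Finset.range (S+1), (-(l:ℂ) * w) ^ ℓ / (Nat.factorial ℓ : ℂ))
      exact hns2.trans (add_le_add (hexpnorm l hl0.le) hsum)
    refine (mul_le_mul_of_nonneg_right habs2 (Real.rpow_nonneg hl0.le e)).trans_eq ?_
    rw [add_mul, one_mul, Finset.sum_mul, he]
    congr 1
    refine Finset.sum_congr rfl fun ℓ _ => ?_
    rw [mul_pow]
    have hll : (l:ℝ) ^ ℓ * l ^ (-s-1) = l ^ ((ℓ:ℝ) - s - 1) := by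
      rw [← Real.rpow_natCast l ℓ, ← Real.rpow_add hl0]; congr 1; ring
    calc W ^ ℓ * l ^ ℓ / (Nat.factorial ℓ : ℝ) * l ^ (-s-1)
        = W ^ ℓ / (Nat.factorial ℓ : ℝ) * ((l:ℝ) ^ ℓ * l ^ (-s-1)) := by ring
      _ = W ^ ℓ / (Nat.factorial ℓ : ℝ) * l ^ ((ℓ:ℝ) - s - 1) := by rw [hll]
  -- integrability of the dominating functions
  have hint1 : IntegrableOn (fun l : ℝ => c1 * l ^ (-σ)) (Set.Ioc 0 t) volume := by
    have h := (intervalIntegrable_iff_integrableOn_Ioc_of_le ht.le).mp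
      (intervalIntegral.intervalIntegrable_rpow' (a := 0) (b := t) (by linarith : (-1:ℝ) < -σ))
    exact h.const_mul c1
  have hGterm : ∀ ℓ ∈ Finset.range (S+1),
      IntegrableOn (fun l : ℝ => (W ^ ℓ / (Nat.factorial ℓ : ℝ)) * l ^ ((ℓ:ℝ) - s - 1))
        (Set.Ioi t) volume := by
    intro ℓ hℓ
    have hℓS : (ℓ:ℝ) ≤ S := by
      have := Finset.mem_range_succ_iff.mp hℓ
      exact_mod_cast this
    have hlt : (ℓ:ℝ) - s - 1 < -1 := by rw [hssum]; linarith
    exact (integrableOn_Ioi_rpow_of_lt hlt ht).const_mul _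
  have hint2 : IntegrableOn (fun l : ℝ => l ^ (-s-1)
      + ∑ ℓ ∈ Finset.range (S+1), (W ^ ℓ / (Nat.factorial ℓ : ℝ)) * l ^ ((ℓ:ℝ) - s - 1))
      (Set.Ioi t) volume := by
    refine (integrableOn_Ioi_rpow_of_lt (by linarith : -s-1 < -1) ht).add ?_
    exact integrable_finset_sum _ hGterm
  -- integrability of g on both pieces
  have hgint1 : IntegrableOn g (Set.Ioc 0 t) volume := by
    refine Integrable.mono' hint1 hmeas.aestronglyMeasurable ?_
    filter_upwards [ae_restrict_mem measurableSet_Ioc] with l hl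
    rw [Real.norm_of_nonneg (hgnn l hl.1)]
    exact hb1 l hl
  have hgint2 : IntegrableOn g (Set.Ioi t) volume := by
    refine Integrable.mono' hint2 hmeas.aestronglyMeasurable ?_
    filter_upwards [ae_restrict_mem measurableSet_Ioi] with l hl
    rw [Real.norm_of_nonneg (hgnn l (ht.trans hl))]
    exact hb2 l hl
  -- split the integral
  have hsplit : ∫ l in Set.Ioi (0:ℝ), g l
      = (∫ l in Set.Ioc 0 t, g l) + ∫ l in Set.Ioi t, g l := by
    rw [← setIntegral_union (Set.Ioc_disjoint_Ioi le_rfl) measurableSet_Ioi hgint1 hgint2,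
      Set.Ioc_union_Ioi_eq_Ioi ht.le]
  -- bound each piece
  have hI1 : ∫ l in Set.Ioc 0 t, g l ≤ ∫ l in Set.Ioc 0 t, c1 * l ^ (-σ) :=
    setIntegral_mono_on hgint1 hint1 measurableSet_Ioc hb1
  have hI2 : ∫ l in Set.Ioi t, g l ≤ ∫ l in Set.Ioi t, (l ^ (-s-1)
      + ∑ ℓ ∈ Finset.range (S+1), (W ^ ℓ / (Nat.factorial ℓ : ℝ)) * l ^ ((ℓ:ℝ) - s - 1)) :=
    setIntegral_mono_on hgint2 hint2 measurableSet_Ioi hb2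
  -- compute the dominating integrals
  have hv1 : ∫ l in Set.Ioc 0 t, c1 * l ^ (-σ) = c1 * (t ^ (1-σ) / (1-σ)) := by
    rw [integral_const_mul]
    congr 1
    rw [← intervalIntegral.integral_of_le ht.le,
      integral_rpow (Or.inl (by linarith : (-1:ℝ) < -σ)),
      Real.zero_rpow (by linarith : -σ + 1 ≠ 0)]
    rw [show -σ + 1 = 1 - σ by ring]
    ring
  have hv2a : ∫ l in Set.Ioi t, l ^ (-s-1) = t ^ (-s) / s := by
    rw [integral_Ioi_rpow_of_lt (by linarith : -s-1 < -1) ht,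
      show -s-1+1 = -s by ring]
    field_simp
  have hv2b : ∀ ℓ ∈ Finset.range (S+1),
      ∫ l in Set.Ioi t, (W ^ ℓ / (Nat.factorial ℓ : ℝ)) * l ^ ((ℓ:ℝ) - s - 1)
        = (W ^ ℓ / (Nat.factorial ℓ : ℝ)) * (t ^ ((ℓ:ℝ) - s) / (s - ℓ)) := by
    intro ℓ hℓ
    have hℓS : (ℓ:ℝ) ≤ S := by
      have := Finset.mem_range_succ_iff.mp hℓ
      exact_mod_cast this
    have hlt : (ℓ:ℝ) - s - 1 < -1 := by rw [hssum]; linarith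
    rw [integral_const_mul, integral_Ioi_rpow_of_lt hlt ht,
      show (ℓ:ℝ) - s - 1 + 1 = (ℓ:ℝ) - s by ring]
    rw [show s - (ℓ:ℝ) = -((ℓ:ℝ) - s) by ring, div_neg, neg_div]
  have hv2 : ∫ l in Set.Ioi t, (l ^ (-s-1)
      + ∑ ℓ ∈ Finset.range (S+1), (W ^ ℓ / (Nat.factorial ℓ : ℝ)) * l ^ ((ℓ:ℝ) - s - 1))
      = t ^ (-s) / s
        + ∑ ℓ ∈ Finset.range (S+1), (W ^ ℓ / (Nat.factorial ℓ : ℝ)) * (t ^ ((ℓ:ℝ) - s) / (s - ℓ)) := by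
    rw [MeasureTheory.integral_add (integrableOn_Ioi_rpow_of_lt (by linarith : -s-1 < -1) ht)
      (integrable_finset_sum _ hGterm), hv2a,
      MeasureTheory.integral_finset_sum _ hGterm]
    congr 1
    exact Finset.sum_congr rfl hv2b
  -- convert to powers of W
  have hσ1' : (1:ℝ) - σ ≠ 0 := by linarith
  have hF0 : (Nat.factorial (S+1) : ℝ) ≠ 0 := Nat.cast_ne_zero.mpr (Nat.factorial_ne_zero _)
  have hT1 : c1 * (t ^ (1-σ) / (1-σ))
      = W ^ s * (1 / ((1-σ) * (Nat.factorial (S+1) : ℝ))) := by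
    rw [htpow, show -(1-σ) = σ - 1 by ring, hc1_def,
      show W ^ (S+1) / (Nat.factorial (S+1) : ℝ) * (W ^ (σ-1) / (1-σ))
        = (W ^ (S+1) * W ^ (σ-1)) * (1 / ((1-σ) * (Nat.factorial (S+1) : ℝ))) by
          field_simp,
      hWpow (S+1) (σ-1), show ((S+1 : ℕ) : ℝ) + (σ-1) = s by rw [hssum]; push_cast; ring]
  have hT2 : t ^ (-s) = W ^ s := by rw [htpow, neg_neg]
  have hT3 : ∀ ℓ ∈ Finset.range (S+1),
      (W ^ ℓ / (Nat.factorial ℓ : ℝ)) * (t ^ ((ℓ:ℝ) - s) / (s - ℓ))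
        = W ^ s * (1 / ((Nat.factorial ℓ : ℝ) * (s - ℓ))) := by
    intro ℓ hℓ
    have hℓS : (ℓ:ℝ) ≤ S := by
      have := Finset.mem_range_succ_iff.mp hℓ
      exact_mod_cast this
    have hsl0 : s - (ℓ:ℝ) ≠ 0 := by rw [hssum]; nlinarith
    have hfl0 : (Nat.factorial ℓ : ℝ) ≠ 0 := Nat.cast_ne_zero.mpr (Nat.factorial_ne_zero _)
    rw [htpow, show -((ℓ:ℝ) - s) = s - (ℓ:ℝ) by ring,
      show W ^ ℓ / (Nat.factorial ℓ : ℝ) * (W ^ (s - (ℓ:ℝ)) / (s - ℓ))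
        = (W ^ ℓ * W ^ (s - (ℓ:ℝ))) * (1 / ((Nat.factorial ℓ : ℝ) * (s - ℓ))) by
          field_simp,
      hWpow ℓ (s - (ℓ:ℝ)), show (ℓ:ℝ) + (s - (ℓ:ℝ)) = s by ring]
  -- the purely numerical estimate
  have hm0 : 0 < min σ (1-σ) := lt_min hσ0 (by linarith)
  have hF : (0:ℝ) < (Nat.factorial (S+1) : ℝ) := by positivity
  have harith : 1 / ((1-σ) * (Nat.factorial (S+1) : ℝ))
      + ∑ ℓ ∈ Finset.range (S+1), 1 / ((Nat.factorial ℓ : ℝ) * (s - ℓ))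
      ≤ Real.exp 1 / min σ (1-σ) := by
    have step1 : 1 / ((1-σ) * (Nat.factorial (S+1) : ℝ))
        ≤ 1 / (min σ (1-σ) * (Nat.factorial (S+1) : ℝ)) :=
      one_div_le_one_div_of_le (by positivity)
        (mul_le_mul_of_nonneg_right (min_le_right _ _) hF.le)
    have step2 : ∀ ℓ ∈ Finset.range (S+1),
        1 / ((Nat.factorial ℓ : ℝ) * (s - ℓ))
          ≤ 1 / ((Nat.factorial ℓ : ℝ) * min σ (1-σ)) := by
      intro ℓ hℓ
      have hℓS : (ℓ:ℝ) ≤ S := by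
        have := Finset.mem_range_succ_iff.mp hℓ
        exact_mod_cast this
      have hsl : min σ (1-σ) ≤ s - ℓ := by
        have h1 := min_le_left σ (1-σ)
        rw [hssum]; linarith
      exact one_div_le_one_div_of_le (by positivity)
        (mul_le_mul_of_nonneg_left hsl (by positivity))
    calc 1 / ((1-σ) * (Nat.factorial (S+1) : ℝ))
        + ∑ ℓ ∈ Finset.range (S+1), 1 / ((Nat.factorial ℓ : ℝ) * (s - ℓ))
        ≤ 1 / (min σ (1-σ) * (Nat.factorial (S+1) : ℝ))
          + ∑ ℓ ∈ Finset.range (S+1), 1 / ((Nat.factorial ℓ : ℝ) * min σ (1-σ)) :=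
          add_le_add step1 (Finset.sum_le_sum step2)
      _ = (∑ ℓ ∈ Finset.range (S+1+1), 1 / (Nat.factorial ℓ : ℝ)) / min σ (1-σ) := by
          conv_rhs => rw [Finset.sum_range_succ, add_div, Finset.sum_div]
          rw [add_comm]
          congr 1
          · exact Finset.sum_congr rfl fun ℓ _ => by rw [div_div]
          · rw [div_div, mul_comm]
      _ ≤ Real.exp 1 / min σ (1-σ) := by
          gcongr
          exact sum_inv_factorial_le (S+1+1)
  -- final assembly
  have hWs : (0:ℝ) ≤ W ^ s := Real.rpow_nonneg hW.le s
  rw [hsplit]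
  calc (∫ l in Set.Ioc 0 t, g l) + ∫ l in Set.Ioi t, g l
      ≤ c1 * (t ^ (1-σ) / (1-σ))
        + (t ^ (-s) / s + ∑ ℓ ∈ Finset.range (S+1),
          (W ^ ℓ / (Nat.factorial ℓ : ℝ)) * (t ^ ((ℓ:ℝ) - s) / (s - ℓ))) :=
        add_le_add (hI1.trans_eq hv1) (hI2.trans_eq hv2)
    _ = W ^ s * (1 / ((1-σ) * (Nat.factorial (S+1) : ℝ))
        + ∑ ℓ ∈ Finset.range (S+1), 1 / ((Nat.factorial ℓ : ℝ) * (s - ℓ)))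
        + W ^ s * (1/s) := by
        rw [hT1, hT2, Finset.sum_congr rfl hT3, ← Finset.mul_sum]
        ring
    _ ≤ W ^ s * (Real.exp 1 / min σ (1-σ)) + W ^ s * (1/s) :=
        add_le_add_left (mul_le_mul_of_nonneg_left harith hWs) _
    _ = (Real.exp 1 / min σ (1-σ) + 1/s) * W ^ s := by ring
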